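/- If λ = (λ₁,…,λ_n) ∈ ℝⁿ has pairwise distinct, strictly negative entries, then for every k ∈ {1,…,n-1}, lim_{t→∞} v_{k-1,λ}(t)/v_{k,λ}(t) = a_{k-1, λ_{¬max}} / a_{k, λ_{¬max}}, where λ_{¬max} removes the maximal entry of λ. -/

import Mathlib

open Finset

noncomputable def acoef {R : Type*} [CommRing R] {n : ℕ} (lam : Fin n → R) (k : ℤ) : R :=
  if 0 ≤ k ∧ k ≤ (n : ℤ) then
    (-1 : R) ^ (n - k.toNat) *
      ∑ I ∈ Finset.univ.powersetCard (n - k.toNat), ∏ i ∈ I, lam i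
  else 0

def removeEntry {α : Type*} {n : ℕ} (lam : Fin n → α) (i : Fin n) : Fin (n - 1) → α :=
  fun j => lam (Fin.cast (Nat.succ_pred_eq_of_pos i.pos)
    ((Fin.cast (Nat.succ_pred_eq_of_pos i.pos).symm i).succAbove j))


noncomputable def vbasisR {n : ℕ} (lam : Fin n → ℝ) (k : ℤ) (t : ℝ) : ℝ :=
  (-1 : ℝ) ^ (n - 1) *
    ∑ i : Fin n, acoef (removeEntry lam i) k /
      (∏ j ∈ Finset.univ.erase i, (lam j - lam i)) * Real.exp (lam i * t)

lemma acoef_pos {n : ℕ} (lam : Fin n → ℝ) (h : ∀ i, lam i < 0) (k : ℤ)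
    (h0 : 0 ≤ k) (hk : k ≤ (n : ℤ)) : 0 < acoef lam k := by
  rw [acoef, if_pos ⟨h0, hk⟩, Finset.mul_sum]
  apply Finset.sum_pos
  · intro I hI
    have hcard := (Finset.mem_powersetCard.mp hI).2
    have key : ∏ i ∈ I, (-lam i) = (-1 : ℝ) ^ (n - k.toNat) * ∏ i ∈ I, lam i := by
      calc ∏ i ∈ I, (-lam i) = ∏ i ∈ I, ((-1 : ℝ) * lam i) := by simp
        _ = (∏ _i ∈ I, (-1 : ℝ)) * ∏ i ∈ I, lam i := Finset.prod_mul_distrib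
        _ = _ := by rw [Finset.prod_const, hcard]
    rw [← key]
    exact Finset.prod_pos (fun i _ => by linarith [h i])
  · refine Finset.powersetCard_nonempty.mpr ?_
    simp only [Finset.card_univ, Fintype.card_fin]
    omega

theorem vandermonde_basis_ratio_limit (n : ℕ) (lam : Fin n → ℝ)
    (h : Function.Injective lam) (hneg : ∀ i, lam i < 0)
    (imax : Fin n) (hmax : ∀ j, j ≠ imax → lam j < lam imax)
    (k : ℕ) (hk1 : 1 ≤ k) (hk : k < n) :
    Filter.Tendsto (fun t : ℝ => vbasisR lam ((k : ℤ) - 1) t / vbasisR lam (k : ℤ) t)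
      Filter.atTop
      (nhds (acoef (removeEntry lam imax) ((k : ℤ) - 1) /
        acoef (removeEntry lam imax) (k : ℤ))) := by
  set P : Fin n → ℝ := fun i => ∏ j ∈ Finset.univ.erase i, (lam j - lam i) with hPdef
  have hP : ∀ i, P i ≠ 0 := by
    intro i
    apply Finset.prod_ne_zero_iff.mpr
    intro j hj
    exact sub_ne_zero.mpr (fun e => (Finset.mem_erase.mp hj).1 (h e))
  set g : ℤ → ℝ → ℝ := fun m t => ∑ i : Fin n,
      acoef (removeEntry lam i) m / P i * Real.exp ((lam i - lam imax) * t) with hgdef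
  have hv : ∀ (m : ℤ) (t : ℝ), vbasisR lam m t
      = ((-1 : ℝ) ^ (n - 1) * Real.exp (lam imax * t)) * g m t := by
    intro m t
    rw [vbasisR, hgdef, mul_assoc]
    congr 1
    rw [Finset.mul_sum]
    apply Finset.sum_congr rfl
    intro i _
    rw [mul_left_comm, ← Real.exp_add,
      show lam imax * t + (lam i - lam imax) * t = lam i * t by ring]
  have hg : ∀ m : ℤ, Filter.Tendsto (g m) Filter.atTop
      (nhds (acoef (removeEntry lam imax) m / P imax)) := by
    intro m
    have hsum : acoef (removeEntry lam imax) m / P imax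
        = ∑ i : Fin n, (if i = imax then acoef (removeEntry lam imax) m / P imax else 0) := by
      simp
    rw [hsum, hgdef]
    apply tendsto_finset_sum
    intro i _
    by_cases hi : i = imax
    · subst hi
      simpa using
        (tendsto_const_nhds : Filter.Tendsto
          (fun _ : ℝ => acoef (removeEntry lam i) m / P i) Filter.atTop _)
    · simp only [hi, if_neg]
      have h1 : Filter.Tendsto (fun t : ℝ => (lam i - lam imax) * t)
          Filter.atTop Filter.atBot := by
        apply Filter.Tendsto.const_mul_atTop_of_neg (sub_neg.mpr (hmax i hi)) Filter.tendsto_id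
      have h2 := (Real.tendsto_exp_atBot.comp h1).const_mul
        (acoef (removeEntry lam i) m / P i)
      simpa using h2
  have hAk : 0 < acoef (removeEntry lam imax) (k : ℤ) := by
    apply acoef_pos
    · intro j; exact hneg _
    · positivity
    · omega
  have hck : acoef (removeEntry lam imax) (k : ℤ) / P imax ≠ 0 :=
    div_ne_zero hAk.ne' (hP imax)
  have hval : acoef (removeEntry lam imax) ((k : ℤ) - 1) / acoef (removeEntry lam imax) (k : ℤ)
      = (acoef (removeEntry lam imax) ((k : ℤ) - 1) / P imax)
        / (acoef (removeEntry lam imax) (k : ℤ) / P imax) := by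
    field_simp
    rw [mul_div_cancel_right₀ _ (hP imax)]
  rw [hval]
  apply ((hg ((k : ℤ) - 1)).div (hg (k : ℤ)) hck).congr
  intro t
  have hne : ((-1 : ℝ) ^ (n - 1) * Real.exp (lam imax * t)) ≠ 0 :=
    mul_ne_zero (pow_ne_zero _ (by norm_num)) (Real.exp_ne_zero _)
  rw [hv, hv, mul_div_mul_left _ _ hne]
  rfl
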